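/- Let a ≥ 1 and d ≥ 2 be real numbers. For every real x with 1 ≤ x ≤ d−1, one has x^{a+1} − (x−1)^{a+1} + (d−x)^{a+1} − (d−x−1)^{a+1} ≤ 1 + (d−1)^{a+1} − (d−2)^{a+1}; that is, the function f(x) = x^{a+1} − (x−1)^{a+1} + (d−x)^{a+1} − (d−x−1)^{a+1} on [1, d−1] attains its maximum at the endpoints x = 1 and x = d−1. -/

import Mathlib

open Set

private lemma aux_mono1 (q δ : ℝ) (hq : 1 ≤ q) (hδ : 0 ≤ δ) :
    MonotoneOn (fun u : ℝ => (u + δ) ^ q - u ^ q) (Set.Ici 0) := by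
  have hderiv : ∀ u : ℝ, HasDerivAt (fun u : ℝ => (u + δ) ^ q - u ^ q)
      (q * (u + δ) ^ (q - 1) * 1 - q * u ^ (q - 1)) u := by
    intro u
    have h1 : HasDerivAt (fun u : ℝ => (u + δ) ^ q) (q * (u + δ) ^ (q - 1) * 1) u :=
      (Real.hasDerivAt_rpow_const (Or.inr hq)).comp u ((hasDerivAt_id u).add_const δ)
    have h2 : HasDerivAt (fun u : ℝ => u ^ q) (q * u ^ (q - 1)) u :=
      Real.hasDerivAt_rpow_const (Or.inr hq)
    exact h1.sub h2
  apply monotoneOn_of_deriv_nonneg (convex_Ici 0)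
  · exact fun u _ => (hderiv u).continuousAt.continuousWithinAt
  · exact fun u _ => (hderiv u).differentiableAt.differentiableWithinAt
  · intro u hu
    rw [interior_Ici] at hu
    rw [(hderiv u).deriv]
    have hle : u ^ (q - 1) ≤ (u + δ) ^ (q - 1) :=
      Real.rpow_le_rpow hu.le (by linarith) (by linarith)
    nlinarith [hle]

private lemma aux_mono2 (p δ : ℝ) (hp : 2 ≤ p) (hδ : 0 ≤ δ) :
    MonotoneOn (fun u : ℝ =>
      ((u + 1 + δ) ^ p - (u + 1) ^ p) - ((u + δ) ^ p - u ^ p)) (Set.Ici 0) := by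
  have hp1 : 1 ≤ p := by linarith
  have hderiv : ∀ u : ℝ, HasDerivAt (fun u : ℝ =>
      ((u + 1 + δ) ^ p - (u + 1) ^ p) - ((u + δ) ^ p - u ^ p))
      ((p * (u + 1 + δ) ^ (p - 1) * 1 - p * (u + 1) ^ (p - 1) * 1) -
        (p * (u + δ) ^ (p - 1) * 1 - p * u ^ (p - 1))) u := by
    intro u
    have h1 : HasDerivAt (fun u : ℝ => (u + 1 + δ) ^ p) (p * (u + 1 + δ) ^ (p - 1) * 1) u :=
      (Real.hasDerivAt_rpow_const (Or.inr hp1)).comp u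
        (((hasDerivAt_id u).add_const 1).add_const δ)
    have h2 : HasDerivAt (fun u : ℝ => (u + 1) ^ p) (p * (u + 1) ^ (p - 1) * 1) u :=
      (Real.hasDerivAt_rpow_const (Or.inr hp1)).comp u ((hasDerivAt_id u).add_const 1)
    have h3 : HasDerivAt (fun u : ℝ => (u + δ) ^ p) (p * (u + δ) ^ (p - 1) * 1) u :=
      (Real.hasDerivAt_rpow_const (Or.inr hp1)).comp u ((hasDerivAt_id u).add_const δ)
    have h4 : HasDerivAt (fun u : ℝ => u ^ p) (p * u ^ (p - 1)) u :=
      Real.hasDerivAt_rpow_const (Or.inr hp1)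
    exact (h1.sub h2).sub (h3.sub h4)
  apply monotoneOn_of_deriv_nonneg (convex_Ici 0)
  · exact fun u _ => (hderiv u).continuousAt.continuousWithinAt
  · exact fun u _ => (hderiv u).differentiableAt.differentiableWithinAt
  · intro u hu
    rw [interior_Ici] at hu
    rw [(hderiv u).deriv]
    have key := aux_mono1 (p - 1) δ (by linarith) hδ
      (show u ∈ Set.Ici (0:ℝ) from Set.mem_Ici.mpr hu.le)
      (show u + 1 ∈ Set.Ici (0:ℝ) by have h0 : 0 < u := hu; simp only [Set.mem_Ici]; linarith) (by linarith)
    simp only at key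
    have h2 := mul_le_mul_of_nonneg_left key (by linarith : (0:ℝ) ≤ p)
    nlinarith [h2]

/-- for reals `a ≥ 1`, `d ≥ 2` and `1 ≤ x ≤ d - 1`,
`x^(a+1) - (x-1)^(a+1) + (d-x)^(a+1) - (d-x-1)^(a+1) ≤ 1 + (d-1)^(a+1) - (d-2)^(a+1)`;
i.e. the function attains its maximum on `[1, d-1]` at the endpoints. -/
theorem rpow_max_at_endpoints (a d x : ℝ) (ha : 1 ≤ a) (hd : 2 ≤ d)
    (hx1 : 1 ≤ x) (hx2 : x ≤ d - 1) :
    x ^ (a + 1) - (x - 1) ^ (a + 1) + (d - x) ^ (a + 1) - (d - x - 1) ^ (a + 1) ≤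
      1 + (d - 1) ^ (a + 1) - (d - 2) ^ (a + 1) := by
  set p := a + 1 with hpdef
  have hp : 2 ≤ p := by simp [hpdef]; linarith
  have hδ : (0:ℝ) ≤ x - 1 := by linarith
  have hv : (0:ℝ) ≤ d - 1 - x := by linarith
  have key := aux_mono2 p (x - 1) hp hδ
    (Set.self_mem_Ici)
    (show d - 1 - x ∈ Set.Ici (0:ℝ) from hv) hv
  simp only at key
  have e1 : (0:ℝ) + 1 + (x - 1) = x := by ring
  have e2 : (0:ℝ) + 1 = 1 := by ring
  have e3 : (0:ℝ) + (x - 1) = x - 1 := by ring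
  have e4 : d - 1 - x + 1 + (x - 1) = d - 1 := by ring
  have e5 : d - 1 - x + 1 = d - x := by ring
  have e6 : d - 1 - x + (x - 1) = d - 2 := by ring
  have e7 : d - 1 - x = d - x - 1 := by ring
  rw [e1, e2, e3, e4, e5, e6, e7] at key
  rw [Real.one_rpow, Real.zero_rpow (by linarith : p ≠ 0)] at key
  linarith
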